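/- Let T, L, P > 0, n ∈ ℕ with n ≥ 1, and let (h,t,ρ) be a discretization with t = Σ₊h, Σ_{j=1}^n h_j = T, and ρ_j = 2LP h_j² for all j ∈ [1,n]. Then E(h,t,ρ) ≤ e^{LT} ( ρ_0/2 + PT(2+LT)(e^{L‖h‖_∞} − 1) ), where ‖h‖_∞ is the maximal step-size. -/
import Mathlib


noncomputable section

/-- The local error term `𝓔_j(h,t,ρ)` of the Euler scheme error bound:
`𝓔_0 = e^{LT} ρ_0/2` and `𝓔_j = e^{L(T-t_j)}(e^{L h_j}-1)(P h_j + ρ_j/2 + ρ_j/(2 L h_j))`. -/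
def calE (T L P : ℝ) (h t ρ : ℕ → ℝ) (j : ℕ) : ℝ :=
  if j = 0 then Real.exp (L * T) * ρ 0 / 2
  else Real.exp (L * (T - t j)) * (Real.exp (L * h j) - 1) *
    (P * h j + ρ j / 2 + ρ j / (2 * L * h j))

/-- The error bound `E(h,t,ρ) = ∑_{j=0}^n 𝓔_j(h,t,ρ)` for a discretization of length `n`. -/
def Ebound (T L P : ℝ) (n : ℕ) (h t ρ : ℕ → ℝ) : ℝ :=
  ∑ j ∈ Finset.range (n + 1), calE T L P h t ρ j

/-- The `h`-component of the subdivision rule `ψ[h,t,ρ;k]`: for `k = 0` the step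
sizes are unchanged, for `k ∈ [1,n]` the entry `h_k` is replaced by the two
entries `h_k/2, h_k/2` and later entries are shifted. -/
def psiH (h : ℕ → ℝ) (k : ℕ) : ℕ → ℝ := fun j =>
  if k = 0 then h j
  else if j < k then h j
  else if j ≤ k + 1 then h k / 2
  else h (j - 1)

/-- The `t`-component of the subdivision rule `ψ[h,t,ρ;k]`: for `k = 0` the nodes
are unchanged, for `k ∈ [1,n]` the node `t_k - h_k/2` is inserted between
`t_{k-1}` and `t_k`. -/
def psiT (h t : ℕ → ℝ) (k : ℕ) : ℕ → ℝ := fun j =>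
  if k = 0 then t j
  else if j < k then t j
  else if j = k then t k - h k / 2
  else t (j - 1)

/-- The `ρ`-component of the subdivision rule `ψ[h,t,ρ;k]`: for `k = 0` the entry
`ρ_0` is replaced by `ρ_0/4`, for `k ∈ [1,n]` the entry `ρ_k` is replaced by the
two entries `ρ_k/4, ρ_k/4` and later entries are shifted. -/
def psiRho (ρ : ℕ → ℝ) (k : ℕ) : ℕ → ℝ := fun j =>
  if k = 0 then (if j = 0 then ρ 0 / 4 else ρ j)
  else if j < k then ρ j
  else if j ≤ k + 1 then ρ k / 4
  else ρ (j - 1)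

/-- The length of the discretization produced by `ψ[h,t,ρ;k]` from one of length `n`:
`n` if `k = 0`, and `n + 1` otherwise. -/
def newn (n k : ℕ) : ℕ := if k = 0 then n else n + 1

/-- `ΔE(h,t,ρ;k) = E(ψ[h,t,ρ;k]) - E(h,t,ρ)`. -/
def deltaE (T L P : ℝ) (n : ℕ) (h t ρ : ℕ → ℝ) (k : ℕ) : ℝ :=
  Ebound T L P (newn n k) (psiH h k) (psiT h t k) (psiRho ρ k) - Ebound T L P n h t ρ

/-- The cost estimator `C(h,t,ρ) = ∑_{j=0}^{n-1} (v_R(t_j)/ρ_j^{d_R}) ·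
(v_F(t_j) h_{j+1}^{d_F} / ρ_{j+1}^{d_F})`. -/
def costC (dR dF : ℕ) (vR vF : ℝ → ℝ) (n : ℕ) (h t ρ : ℕ → ℝ) : ℝ :=
  ∑ j ∈ Finset.range n,
    (vR (t j) / ρ j ^ dR) * (vF (t j) * h (j + 1) ^ dF / ρ (j + 1) ^ dF)

/-- `ΔC(h,t,ρ;k) = C(ψ[h,t,ρ;k]) - C(h,t,ρ)`. -/
def deltaC (dR dF : ℕ) (vR vF : ℝ → ℝ) (n : ℕ) (h t ρ : ℕ → ℝ) (k : ℕ) : ℝ :=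
  costC dR dF vR vF (newn n k) (psiH h k) (psiT h t k) (psiRho ρ k) -
    costC dR dF vR vF n h t ρ

theorem stmt_15 (T L P : ℝ) (hT : 0 < T) (hL : 0 < L) (hP : 0 < P)
    (n : ℕ) (hn : 1 ≤ n) (h t ρ : ℕ → ℝ)
    (hh : ∀ j, 1 ≤ j → j ≤ n → 0 < h j)
    (htnn : ∀ j, j ≤ n → 0 ≤ t j)
    (hρ : ∀ j, j ≤ n → 0 < ρ j)
    (hsum : ∑ j ∈ Finset.Icc 1 n, h j = T)
    (hcum : ∀ k, k ≤ n → t k = ∑ j ∈ Finset.Icc 1 k, h j)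
    (hcoup : ∀ j, 1 ≤ j → j ≤ n → ρ j = 2 * L * P * (h j) ^ 2) :
    Ebound T L P n h t ρ ≤
      Real.exp (L * T) * (ρ 0 / 2 +
        P * T * (2 + L * T) *
          (Real.exp (L * sSup {x : ℝ | ∃ j, 1 ≤ j ∧ j ≤ n ∧ x = h j}) - 1)) := by

  set M := sSup {x : ℝ | ∃ j, 1 ≤ j ∧ j ≤ n ∧ x = h j} with hM
  have hSeq : {x : ℝ | ∃ j, 1 ≤ j ∧ j ≤ n ∧ x = h j} = ↑((Finset.Icc 1 n).image h) := by
    ext x; simp [eq_comm, and_assoc]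
  have hbdd : BddAbove {x : ℝ | ∃ j, 1 ≤ j ∧ j ≤ n ∧ x = h j} := by
    rw [hSeq]; exact ((Finset.Icc 1 n).image h).bddAbove
  have hle : ∀ j, 1 ≤ j → j ≤ n → h j ≤ M :=
    fun j h1 h2 => le_csSup hbdd ⟨j, h1, h2, rfl⟩
  have hjT : ∀ j, 1 ≤ j → j ≤ n → h j ≤ T := by
    intro j h1 h2
    rw [← hsum]
    exact Finset.single_le_sum
      (fun i hi => (hh i (Finset.mem_Icc.mp hi).1 (Finset.mem_Icc.mp hi).2).le)
      (Finset.mem_Icc.mpr ⟨h1, h2⟩)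
  have hsplit : Finset.range (n + 1) = insert 0 (Finset.Icc 1 n) := by
    ext x; simp [Nat.lt_succ_iff]; omega
  rw [Ebound, hsplit, Finset.sum_insert (by simp)]
  have h0 : calE T L P h t ρ 0 = Real.exp (L * T) * (ρ 0 / 2) := by
    simp [calE]; ring
  have hterm : ∀ j ∈ Finset.Icc 1 n,
      calE T L P h t ρ j ≤
        Real.exp (L * T) * ((Real.exp (L * M) - 1) * (P * (2 + L * T))) * h j := by
    intro j hj
    obtain ⟨h1, h2⟩ := Finset.mem_Icc.mp hj
    have hhj := hh j h1 h2
    have hρj := hcoup j h1 h2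
    have hMj := hle j h1 h2
    have hTj := hjT j h1 h2
    have htj := htnn j h2
    have e1 : calE T L P h t ρ j =
        Real.exp (L * (T - t j)) * ((Real.exp (L * h j) - 1) * (P * h j * (2 + L * h j))) := by
      have hj0 : j ≠ 0 := by omega
      simp only [calE, if_neg hj0, hρj]
      field_simp
      ring
    rw [e1]
    have hB0 : (0:ℝ) ≤ Real.exp (L * h j) - 1 := by
      have : (1:ℝ) ≤ Real.exp (L * h j) := Real.one_le_exp (by positivity)
      linarith
    have hC0 : (0:ℝ) ≤ P * h j * (2 + L * h j) := by positivity
    calc Real.exp (L * (T - t j)) * ((Real.exp (L * h j) - 1) * (P * h j * (2 + L * h j)))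
        ≤ Real.exp (L * T) * ((Real.exp (L * M) - 1) * (P * h j * (2 + L * T))) := by
          have hMpos : 0 < M := lt_of_lt_of_le (hh 1 le_rfl hn) (hle 1 le_rfl hn)
          gcongr <;>
            first
              | nlinarith [Real.one_le_exp (show (0:ℝ) ≤ L * M by positivity)]
              | exact Real.exp_le_exp.mpr (by nlinarith)
              | positivity
      _ = Real.exp (L * T) * ((Real.exp (L * M) - 1) * (P * (2 + L * T))) * h j := by ring
  have hsum2 := Finset.sum_le_sum hterm
  rw [← Finset.mul_sum, hsum] at hsum2
  have := hsum2
  rw [h0]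
  nlinarith [this]
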